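/- Let A ∈ ℝ^{n×n}, B ∈ ℝ^{n×m}, and K ∈ ℝ^{m×n} be such that the spectral radius ρ(A+BK) < 1. Let Q ∈ ℝ^{n×n} be symmetric positive definite, and let P ∈ ℝ^{n×n} be a symmetric positive semidefinite matrix solving the Lyapunov equation P = (A+BK)ᵀ P (A+BK) + Q. Let G ∈ ℝ^{m×n} with BG ≠ 0, and let η be a real number with 0 ≤ η ≤ λ_min(Q) / (2 λ_max(P) ‖BG‖). Then ρ(A + B(K + ηG)) < 1, i.e., K + ηG is a stabilizing controller. -/

import Mathlib

open Matrix
open scoped Matrix.Norms.L2Operator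

/-- `ρ(M) < 1`: every complex eigenvalue of the real square matrix `M`
(i.e. every element of the spectrum of `M` viewed as a complex matrix)
has modulus `< 1`. -/
def SpecRadiusLtOne {n : ℕ} (M : Matrix (Fin n) (Fin n) ℝ) : Prop :=
  ∀ z ∈ spectrum ℂ (M.map (algebraMap ℝ ℂ)), ‖z‖ < 1

namespace StabCert

lemma exists_eigvec {n : ℕ} (M : Matrix (Fin n) (Fin n) ℂ) {z : ℂ}
    (hz : z ∈ spectrum ℂ M) : ∃ v : Fin n → ℂ, v ≠ 0 ∧ M *ᵥ v = z • v := by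
  have h1 : z ∈ spectrum ℂ (Matrix.toLin' M) := by
    rw [show Matrix.toLin' M = Matrix.toLinAlgEquiv' M from rfl, AlgEquiv.spectrum_eq]; exact hz
  have h2 : Module.End.HasEigenvalue (Matrix.toLin' M) z :=
    Module.End.hasEigenvalue_iff_mem_spectrum.mpr h1
  obtain ⟨v, hv⟩ := h2.exists_hasEigenvector
  exact ⟨v, hv.2, by simpa [Matrix.toLin'_apply] using hv.apply_eq_smul⟩

lemma quadform_conj {n m : ℕ} (M : Matrix (Fin m) (Fin m) ℝ) (N : Matrix (Fin m) (Fin n) ℝ)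
    (x : Fin n → ℝ) : x ⬝ᵥ (Nᵀ * M * N) *ᵥ x = (N *ᵥ x) ⬝ᵥ M *ᵥ (N *ᵥ x) := by
  rw [← Matrix.mulVec_mulVec, ← Matrix.mulVec_mulVec, Matrix.dotProduct_mulVec x,
    Matrix.vecMul_transpose]

lemma dot_nonneg {k : ℕ} (v : Fin k → ℝ) : 0 ≤ v ⬝ᵥ v :=
  Finset.sum_nonneg fun _ _ => mul_self_nonneg _

lemma dot_pos {k : ℕ} {v : Fin k → ℝ} (hv : v ≠ 0) : 0 < v ⬝ᵥ v := by
  rcases (dot_nonneg v).eq_or_lt with h | h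
  · exact absurd (dotProduct_self_eq_zero.mp h.symm) hv
  · exact h

lemma psd_nonneg {n : ℕ} {P : Matrix (Fin n) (Fin n) ℝ} (hP : P.PosSemidef) (y : Fin n → ℝ) :
    0 ≤ y ⬝ᵥ P *ᵥ y := by simpa using hP.re_dotProduct_nonneg y

lemma pd_pos {n : ℕ} {Q : Matrix (Fin n) (Fin n) ℝ} (hQ : Q.PosDef) {x : Fin n → ℝ}
    (hx : x ≠ 0) : 0 < x ⬝ᵥ Q *ᵥ x := by simpa using hQ.re_dotProduct_pos hx

lemma aux_opnorm {a b : ℕ} (T : Matrix (Fin a) (Fin b) ℝ) (x : Fin b → ℝ) :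
    (T *ᵥ x) ⬝ᵥ (T *ᵥ x) ≤ ‖T‖^2 * (x ⬝ᵥ x) := by
  have hx : ∀ {k : ℕ} (v : Fin k → ℝ),
      v ⬝ᵥ v = ‖(WithLp.equiv 2 (Fin k → ℝ)).symm v‖^2 := by
    intro k v
    rw [EuclideanSpace.norm_eq]
    rw [Real.sq_sqrt (Finset.sum_nonneg fun i _ => sq_nonneg _)]
    simp [dotProduct, pow_two]
  have h' : ‖(WithLp.equiv 2 (Fin a → ℝ)).symm (T *ᵥ x)‖ ≤
      ‖T‖ * ‖(WithLp.equiv 2 (Fin b → ℝ)).symm x‖ :=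
    T.l2_opNorm_mulVec ((WithLp.equiv 2 (Fin b → ℝ)).symm x)
  rw [hx (T *ᵥ x), hx x]
  nlinarith [norm_nonneg ((WithLp.equiv 2 (Fin a → ℝ)).symm (T *ᵥ x)),
    norm_nonneg ((WithLp.equiv 2 (Fin b → ℝ)).symm x), norm_nonneg T]

lemma aux_diag {n : ℕ} (S : Matrix (Fin n) (Fin n) ℝ) (hS : S.IsHermitian) (x : Fin n → ℝ) :
    ∃ w : Fin n → ℝ, x ⬝ᵥ S *ᵥ x = ∑ i, hS.eigenvalues i * (w i)^2 ∧ x ⬝ᵥ x = ∑ i, (w i)^2 := by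
  classical
  set U : Matrix (Fin n) (Fin n) ℝ := (hS.eigenvectorUnitary : Matrix (Fin n) (Fin n) ℝ) with hU
  have hUU : U * star U = 1 := Unitary.mul_star_self_of_mem hS.eigenvectorUnitary.2
  have hstar : (star U : Matrix (Fin n) (Fin n) ℝ) = Uᵀ := by
    ext i j; simp [Matrix.star_eq_conjTranspose, Matrix.conjTranspose_apply]
  refine ⟨Uᵀ *ᵥ x, ?_, ?_⟩
  · conv_lhs => rw [hS.spectral_theorem, Unitary.conjStarAlgAut_apply]
    rw [← hU, hstar]
    have := quadform_conj (diagonal (RCLike.ofReal ∘ hS.eigenvalues)) Uᵀ x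
    rw [show Uᵀᵀ * diagonal (RCLike.ofReal ∘ hS.eigenvalues) * Uᵀ
        = U * diagonal (RCLike.ofReal ∘ hS.eigenvalues) * Uᵀ from by
          rw [Matrix.transpose_transpose]] at this
    rw [this]
    simp [dotProduct, Matrix.mulVec_diagonal, Function.comp, pow_two]
    exact Finset.sum_congr rfl fun i _ => by ring
  · have h1 : (1 : Matrix (Fin n) (Fin n) ℝ) = Uᵀᵀ * 1 * Uᵀ := by
      rw [Matrix.transpose_transpose, Matrix.mul_one, ← hstar, hUU]
    conv_lhs => rw [show x ⬝ᵥ x = x ⬝ᵥ (1 : Matrix (Fin n) (Fin n) ℝ) *ᵥ x by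
      rw [Matrix.one_mulVec], h1]
    rw [quadform_conj]
    simp [dotProduct, pow_two]

lemma rayleigh_upper {n : ℕ} (S : Matrix (Fin n) (Fin n) ℝ) (hS : S.IsHermitian)
    (x : Fin n → ℝ) : x ⬝ᵥ S *ᵥ x ≤ (⨆ i, hS.eigenvalues i) * (x ⬝ᵥ x) := by
  obtain ⟨w, h1, h2⟩ := aux_diag S hS x
  rw [h1, h2, Finset.mul_sum]
  refine Finset.sum_le_sum fun i _ => ?_
  exact mul_le_mul_of_nonneg_right
    (le_ciSup (Set.Finite.bddAbove (Set.finite_range _)) i) (sq_nonneg _)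

lemma rayleigh_lower {n : ℕ} (S : Matrix (Fin n) (Fin n) ℝ) (hS : S.IsHermitian)
    (x : Fin n → ℝ) : (⨅ i, hS.eigenvalues i) * (x ⬝ᵥ x) ≤ x ⬝ᵥ S *ᵥ x := by
  obtain ⟨w, h1, h2⟩ := aux_diag S hS x
  rw [h1, h2, Finset.mul_sum]
  refine Finset.sum_le_sum fun i _ => ?_
  exact mul_le_mul_of_nonneg_right
    (ciInf_le (Set.Finite.bddBelow (Set.finite_range _)) i) (sq_nonneg _)

lemma psd_cs {n : ℕ} {P : Matrix (Fin n) (Fin n) ℝ} (hP : P.PosSemidef) (u w : Fin n → ℝ) :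
    (u ⬝ᵥ P *ᵥ w)^2 ≤ (u ⬝ᵥ P *ᵥ u) * (w ⬝ᵥ P *ᵥ w) := by
  have h := discrim_le_zero (a := w ⬝ᵥ P *ᵥ w) (b := 2 * (u ⬝ᵥ P *ᵥ w)) (c := u ⬝ᵥ P *ᵥ u)
    (fun t => by
      have := psd_nonneg hP (u + t • w)
      have hPT : Pᵀ = P := by
        have h2 : Pᴴ = P := hP.1
        rwa [Matrix.conjTranspose_eq_transpose_of_trivial] at h2
      have hsymm : w ⬝ᵥ P *ᵥ u = u ⬝ᵥ P *ᵥ w := by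
        rw [Matrix.dotProduct_mulVec w, ← Matrix.mulVec_transpose, hPT, dotProduct_comm]
      simp only [Matrix.mulVec_add, Matrix.mulVec_smul, add_dotProduct, smul_dotProduct,
        dotProduct_add, dotProduct_smul, smul_eq_mul] at this
      rw [hsymm] at this
      nlinarith [this])
  unfold discrim at h
  nlinarith [h]

lemma re_quad {n : ℕ} (T : Matrix (Fin n) (Fin n) ℝ) (v : Fin n → ℂ) :
    (star v ⬝ᵥ (T.map (algebraMap ℝ ℂ)) *ᵥ v).re
      = (fun i => (v i).re) ⬝ᵥ T *ᵥ (fun i => (v i).re)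
        + (fun i => (v i).im) ⬝ᵥ T *ᵥ (fun i => (v i).im) := by
  simp only [dotProduct, Matrix.mulVec, Matrix.map_apply, Pi.star_apply]
  rw [Complex.re_sum, ← Finset.sum_add_distrib]
  refine Finset.sum_congr rfl fun i _ => ?_
  simp only [Finset.mul_sum, Complex.re_sum]
  rw [← Finset.sum_add_distrib]
  refine Finset.sum_congr rfl fun j _ => ?_
  simp [Complex.mul_re, Complex.mul_im, RCLike.star_def, Complex.conj_re, Complex.conj_im]

lemma key_arith (μ lam c N2 q p pu pw pc η : ℝ)
    (hμ : 0 < μ) (hlam : 0 < lam) (hN : 0 < N2)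
    (hpu : 0 ≤ pu) (hpw : 0 ≤ pw)
    (hCS : pc^2 ≤ pu * pw)
    (f1 : pu = p - q)
    (f2 : pw ≤ lam * (c^2 * N2))
    (f3 : μ * N2 ≤ q)
    (f4 : p ≤ lam * N2)
    (hη : 0 < η) (hc : 0 < c)
    (hηle : η * (2 * lam * c) ≤ μ) :
    pu + 2*η*pc + η^2*pw < p := by
  have hpu_le : pu ≤ (lam - μ)*N2 := by nlinarith
  have hlamμ : μ ≤ lam := by nlinarith
  have hsq : (η * (2*lam*c))^2 ≤ μ^2 :=
    pow_le_pow_left₀ (by positivity) hηle 2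
  have hY : 4*lam*(η^2*pw) ≤ μ^2*N2 := by
    have s1 : η^2*pw ≤ η^2*(lam*(c^2*N2)) := mul_le_mul_of_nonneg_left f2 (sq_nonneg η)
    have s4 : 4*lam*(η^2*pw) ≤ 4*lam*(η^2*(lam*(c^2*N2))) :=
      mul_le_mul_of_nonneg_left s1 (by positivity)
    calc 4*lam*(η^2*pw) ≤ 4*lam*(η^2*(lam*(c^2*N2))) := s4
      _ = (η*(2*lam*c))^2*N2 := by ring
      _ ≤ μ^2*N2 := mul_le_mul_of_nonneg_right hsq hN.le
  have hX2 : lam*(2*η*pc)^2 ≤ μ^2*(lam-μ)*N2^2 := by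
    have h1 : (2*η*pc)^2 ≤ 4*η^2*(pu*pw) := by nlinarith [sq_nonneg η, hCS]
    have h2 : pu*pw ≤ ((lam-μ)*N2)*(lam*(c^2*N2)) :=
      mul_le_mul hpu_le f2 hpw (by nlinarith)
    have h3 : lam*(2*η*pc)^2 ≤ lam*(4*η^2*(pu*pw)) := mul_le_mul_of_nonneg_left h1 hlam.le
    have h4 : lam*(4*η^2*(pu*pw)) ≤ lam*(4*η^2*(((lam-μ)*N2)*(lam*(c^2*N2)))) :=
      mul_le_mul_of_nonneg_left (mul_le_mul_of_nonneg_left h2 (by positivity)) hlam.le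
    have h6 : ((lam-μ)*N2^2)*(η*(2*lam*c))^2 ≤ ((lam-μ)*N2^2)*μ^2 :=
      mul_le_mul_of_nonneg_left hsq (by nlinarith)
    calc lam*(2*η*pc)^2 ≤ lam*(4*η^2*(pu*pw)) := h3
      _ ≤ lam*(4*η^2*(((lam-μ)*N2)*(lam*(c^2*N2)))) := h4
      _ = ((lam-μ)*N2^2)*(η*(2*lam*c))^2 := by ring
      _ ≤ ((lam-μ)*N2^2)*μ^2 := h6
      _ = μ^2*(lam-μ)*N2^2 := by ring
  have hRHS : 0 < μ*N2*(4*lam-μ) :=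
    mul_pos (mul_pos hμ hN) (by linarith)
  have hXlt : 4*lam*(2*η*pc) < μ*N2*(4*lam-μ) := by
    refine lt_of_pow_lt_pow_left₀ 2 hRHS.le ?_
    have e2 : 16*lam*(lam*(2*η*pc)^2) ≤ 16*lam*(μ^2*(lam-μ)*N2^2) :=
      mul_le_mul_of_nonneg_left hX2 (by positivity)
    have e3 : (μ*N2*(4*lam-μ))^2 - 16*lam*(μ^2*(lam-μ)*N2^2)
        = μ^2*N2^2*(8*lam*μ+μ^2) := by ring
    have e4 : 0 < μ^2*N2^2*(8*lam*μ+μ^2) := by positivity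
    calc (4*lam*(2*η*pc))^2 = 16*lam*(lam*(2*η*pc)^2) := by ring
      _ ≤ 16*lam*(μ^2*(lam-μ)*N2^2) := e2
      _ < (μ*N2*(4*lam-μ))^2 := by linarith
  have c1 : 4*lam*(2*η*pc + η^2*pw) < 4*lam*(μ*N2) := by
    calc 4*lam*(2*η*pc + η^2*pw) = 4*lam*(2*η*pc) + 4*lam*(η^2*pw) := by ring
      _ < μ*N2*(4*lam-μ) + μ^2*N2 := by linarith
      _ = 4*lam*(μ*N2) := by ring
  have final : 2*η*pc + η^2*pw < μ*N2 := lt_of_mul_lt_mul_left c1 (by positivity)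
  linarith

end StabCert
/-- **Stability certificate** (Lemma 4.1 of Talebi–Mesbahi / Lemma 1):
if `P ⪰ 0` solves the Lyapunov equation `P = (A+BK)ᵀ P (A+BK) + Q` with `Q ≻ 0`
and `ρ(A+BK) < 1`, then for any direction `G` with `BG ≠ 0` and any step size
`0 ≤ η ≤ λ_min(Q) / (2 λ_max(P) ‖BG‖)`, the controller `K + ηG` is stabilizing. -/
theorem stability_certificate
    {n m : ℕ}
    (A : Matrix (Fin n) (Fin n) ℝ) (B : Matrix (Fin n) (Fin m) ℝ)
    (K G : Matrix (Fin m) (Fin n) ℝ)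
    (Q P : Matrix (Fin n) (Fin n) ℝ)
    (hQ : Q.PosDef) (hP : P.PosSemidef)
    (hstab : SpecRadiusLtOne (A + B * K))
    (hLyap : P = (A + B * K)ᵀ * P * (A + B * K) + Q)
    (hBG : B * G ≠ 0)
    (η : ℝ)
    (hη0 : 0 ≤ η)
    (hη1 : η ≤ (⨅ i, hQ.isHermitian.eigenvalues i) /
      (2 * (⨆ i, hP.isHermitian.eigenvalues i) * ‖B * G‖)) :
    SpecRadiusLtOne (A + B * (K + η • G)) := by
  intro z hz
  obtain ⟨v, hv0, hvz⟩ := StabCert.exists_eigvec _ hz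
  rcases Nat.eq_zero_or_pos n with hn | hn
  · subst hn; exact absurd (Subsingleton.elim v 0) hv0
  rcases hη0.eq_or_lt with h0 | hηpos
  · have hME : A + B * (K + η • G) = A + B * K := by rw [← h0]; simp
    rw [hME] at hz
    exact hstab z hz
  set Acl := A + B * K with hAcl
  set Δ := B * G with hΔ
  have hM' : A + B * (K + η • G) = Acl + η • Δ := by
    rw [Matrix.mul_add, Matrix.mul_smul, ← add_assoc, hAcl, hΔ]
  haveI : Nonempty (Fin n) := ⟨⟨0, hn⟩⟩
  set μ := ⨅ i, hQ.isHermitian.eigenvalues i with hμdef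
  set lam := ⨆ i, hP.isHermitian.eigenvalues i with hlamdef
  have hc : (0:ℝ) < ‖Δ‖ := norm_pos_iff.mpr hBG
  have hμ : 0 < μ := by
    have hmem : μ ∈ Set.range hQ.isHermitian.eigenvalues := by
      rw [hμdef, iInf]
      exact (Set.range_nonempty _).csInf_mem (Set.finite_range _)
    obtain ⟨i, hi⟩ := hmem
    rw [← hi]; exact hQ.eigenvalues_pos i
  have hPD : P.PosDef := by
    refine posDef_iff_dotProduct_mulVec.mpr ⟨hP.1, fun x hx => ?_⟩
    have hsplit : x ⬝ᵥ P *ᵥ x = (Acl *ᵥ x) ⬝ᵥ P *ᵥ (Acl *ᵥ x) + x ⬝ᵥ Q *ᵥ x := by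
      conv_lhs => rw [hLyap]
      rw [Matrix.add_mulVec, dotProduct_add, StabCert.quadform_conj]
    have h1 := StabCert.psd_nonneg hP (Acl *ᵥ x)
    have h2 := StabCert.pd_pos hQ hx
    simpa using (by linarith [hsplit.ge, hsplit.le] : (0:ℝ) < x ⬝ᵥ P *ᵥ x)
  have hlam : 0 < lam := by
    obtain ⟨i⟩ := (inferInstance : Nonempty (Fin n))
    calc (0:ℝ) < hP.isHermitian.eigenvalues i := hPD.eigenvalues_pos i
      _ ≤ lam := le_ciSup (Set.Finite.bddAbove (Set.finite_range _)) i
  have hηle : η * (2 * lam * ‖Δ‖) ≤ μ :=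
    (le_div_iff₀ (by positivity)).mp hη1
  have key : ∀ x : Fin n → ℝ, x ≠ 0 →
      x ⬝ᵥ ((Acl + η • Δ)ᵀ * P * (Acl + η • Δ)) *ᵥ x < x ⬝ᵥ P *ᵥ x := by
    intro x hx
    rw [StabCert.quadform_conj]
    have hMx : (Acl + η • Δ) *ᵥ x = Acl *ᵥ x + η • (Δ *ᵥ x) := by
      rw [Matrix.add_mulVec, Matrix.smul_mulVec]
    rw [hMx]
    set u := Acl *ᵥ x with hu
    set w := Δ *ᵥ x with hw
    have hPT : Pᵀ = P := by
      have h2 : Pᴴ = P := hP.1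
      rwa [Matrix.conjTranspose_eq_transpose_of_trivial] at h2
    have hsymm : w ⬝ᵥ P *ᵥ u = u ⬝ᵥ P *ᵥ w := by
      rw [Matrix.dotProduct_mulVec w, ← Matrix.mulVec_transpose, hPT, dotProduct_comm]
    have expand : (u + η • w) ⬝ᵥ P *ᵥ (u + η • w)
        = u ⬝ᵥ P *ᵥ u + 2*η*(u ⬝ᵥ P *ᵥ w) + η^2*(w ⬝ᵥ P *ᵥ w) := by
      simp only [Matrix.mulVec_add, Matrix.mulVec_smul, add_dotProduct,
        smul_dotProduct, dotProduct_add, dotProduct_smul,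
        smul_eq_mul]
      rw [hsymm]; ring
    rw [expand]
    have hAPA : Aclᵀ * P * Acl = P - Q := eq_sub_of_add_eq hLyap.symm
    have f1 : u ⬝ᵥ P *ᵥ u = x ⬝ᵥ P *ᵥ x - x ⬝ᵥ Q *ᵥ x := by
      calc u ⬝ᵥ P *ᵥ u = x ⬝ᵥ (Aclᵀ * P * Acl) *ᵥ x := (StabCert.quadform_conj P Acl x).symm
        _ = x ⬝ᵥ (P - Q) *ᵥ x := by rw [hAPA]
        _ = x ⬝ᵥ P *ᵥ x - x ⬝ᵥ Q *ᵥ x := by rw [Matrix.sub_mulVec, dotProduct_sub]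
    have f2 : w ⬝ᵥ P *ᵥ w ≤ lam * (‖Δ‖^2 * (x ⬝ᵥ x)) := by
      calc w ⬝ᵥ P *ᵥ w ≤ lam * (w ⬝ᵥ w) := StabCert.rayleigh_upper P hP.isHermitian w
        _ ≤ lam * (‖Δ‖^2 * (x ⬝ᵥ x)) :=
          mul_le_mul_of_nonneg_left (StabCert.aux_opnorm Δ x) hlam.le
    have f3 : μ * (x ⬝ᵥ x) ≤ x ⬝ᵥ Q *ᵥ x := StabCert.rayleigh_lower Q hQ.isHermitian x
    have f4 : x ⬝ᵥ P *ᵥ x ≤ lam * (x ⬝ᵥ x) := StabCert.rayleigh_upper P hP.isHermitian x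
    have fCS := StabCert.psd_cs hP u w
    have hN := StabCert.dot_pos hx
    have hpu := StabCert.psd_nonneg hP u
    have hpw := StabCert.psd_nonneg hP w
    have hf2' : w ⬝ᵥ P *ᵥ w ≤ lam * (‖Δ‖^2 * (x ⬝ᵥ x)) := f2
    exact StabCert.key_arith μ lam ‖Δ‖ (x ⬝ᵥ x) (x ⬝ᵥ Q *ᵥ x) (x ⬝ᵥ P *ᵥ x)
      (u ⬝ᵥ P *ᵥ u) (w ⬝ᵥ P *ᵥ w) (u ⬝ᵥ P *ᵥ w) η hμ hlam hN hpu hpw fCS f1 hf2' f3 f4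
      hηpos hc hηle
  have key' : ∀ x : Fin n → ℝ,
      x ⬝ᵥ ((Acl + η • Δ)ᵀ * P * (Acl + η • Δ)) *ᵥ x ≤ x ⬝ᵥ P *ᵥ x := by
    intro x
    by_cases hx : x = 0
    · subst hx; simp
    · exact (key x hx).le
  rw [hM'] at hvz
  have hvre : (fun i => (v i).re) ≠ 0 ∨ (fun i => (v i).im) ≠ 0 := by
    by_contra h
    push_neg at h
    apply hv0
    funext i
    have h1 := congrFun h.1 i
    have h2 := congrFun h.2 i
    simp only [Pi.zero_apply] at h1 h2
    exact Complex.ext (by simpa using h1) (by simpa using h2)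
  have hstarv : ((Acl + η • Δ).map (algebraMap ℝ ℂ)) *ᵥ star v
      = star (((Acl + η • Δ).map (algebraMap ℝ ℂ)) *ᵥ v) := by
    funext i
    simp only [Matrix.mulVec, dotProduct, Pi.star_apply]
    rw [star_sum]
    refine Finset.sum_congr rfl fun j _ => ?_
    rw [star_mul']
    simp [Matrix.map_apply, Complex.star_def, Complex.conj_ofReal]
  have hquad : star v ⬝ᵥ (((Acl + η • Δ)ᵀ * P * (Acl + η • Δ)).map (algebraMap ℝ ℂ)) *ᵥ v
      = star (((Acl + η • Δ).map (algebraMap ℝ ℂ)) *ᵥ v) ⬝ᵥ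
        (P.map (algebraMap ℝ ℂ)) *ᵥ (((Acl + η • Δ).map (algebraMap ℝ ℂ)) *ᵥ v) := by
    rw [Matrix.map_mul, Matrix.map_mul, Matrix.transpose_map]
    rw [← Matrix.mulVec_mulVec, ← Matrix.mulVec_mulVec, Matrix.dotProduct_mulVec (star v),
      Matrix.vecMul_transpose, hstarv]
  have hzz : (starRingEnd ℂ) z * z = ((‖z‖^2 : ℝ) : ℂ) := by
    rw [mul_comm, Complex.mul_conj]
    rw [Complex.normSq_eq_norm_sq]
  have hval : star (((Acl + η • Δ).map (algebraMap ℝ ℂ)) *ᵥ v) ⬝ᵥ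
        (P.map (algebraMap ℝ ℂ)) *ᵥ (((Acl + η • Δ).map (algebraMap ℝ ℂ)) *ᵥ v)
      = ((‖z‖^2 : ℝ) : ℂ) * (star v ⬝ᵥ (P.map (algebraMap ℝ ℂ)) *ᵥ v) := by
    rw [hvz, star_smul, smul_dotProduct, Matrix.mulVec_smul, dotProduct_smul]
    rw [smul_eq_mul, smul_eq_mul, ← mul_assoc]
    rw [show (star z : ℂ) = (starRingEnd ℂ) z from rfl, hzz]
  have hrePpos : 0 < (star v ⬝ᵥ (P.map (algebraMap ℝ ℂ)) *ᵥ v).re := by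
    rw [StabCert.re_quad]
    rcases hvre with h | h
    · exact add_pos_of_pos_of_nonneg (StabCert.pd_pos hPD h) (StabCert.psd_nonneg hPD.posSemidef _)
    · exact add_pos_of_nonneg_of_pos (StabCert.psd_nonneg hPD.posSemidef _) (StabCert.pd_pos hPD h)
  have hreS : (star v ⬝ᵥ (((Acl + η • Δ)ᵀ * P * (Acl + η • Δ)).map (algebraMap ℝ ℂ)) *ᵥ v).re
      < (star v ⬝ᵥ (P.map (algebraMap ℝ ℂ)) *ᵥ v).re := by
    rw [StabCert.re_quad, StabCert.re_quad]
    rcases hvre with h | h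
    · exact add_lt_add_of_lt_of_le (key _ h) (key' _)
    · exact add_lt_add_of_le_of_lt (key' _) (key _ h)
  rw [hquad, hval, Complex.re_ofReal_mul] at hreS
  have h9 : ‖z‖^2 < 1 := by nlinarith [hrePpos, hreS]
  nlinarith [norm_nonneg z, h9]
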